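/- Let E be a finite index set, and for each i ∈ E let x_i ∈ ℝ^d and let R_i be a finite nonempty index set with vectors x_j ∈ ℝ^d for j ∈ R_i. Then the log partial likelihood β ↦ Σ_{i ∈ E} [⟨x_i, β⟩ − log Σ_{j ∈ R_i} exp(⟨x_j, β⟩)] is a concave function on ℝ^d. -/

import Mathlib

open scoped RealInnerProductSpace BigOperators

/-- Log-sum-exp of linear functionals is convex (proved via Hölder's inequality). -/
lemma lse_convexOn {d : ℕ} {κ : Type*} (s : Finset κ) (hs : s.Nonempty)
    (y : κ → EuclideanSpace ℝ (Fin d)) :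
    ConvexOn ℝ Set.univ
      (fun β : EuclideanSpace ℝ (Fin d) =>
        Real.log (∑ j ∈ s, Real.exp ⟪y j, β⟫)) := by
  have Spos : ∀ β : EuclideanSpace ℝ (Fin d), 0 < ∑ j ∈ s, Real.exp ⟪y j, β⟫ := fun β =>
    Finset.sum_pos (fun j _ => Real.exp_pos _) hs
  refine ⟨convex_univ, ?_⟩
  intro u _ v _ a b ha hb hab
  rcases eq_or_lt_of_le ha with rfl | ha'
  · have hb1 : b = 1 := by linarith
    subst hb1; simp
  rcases eq_or_lt_of_le hb with rfl | hb'
  · have ha1 : a = 1 := by linarith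
    subst ha1; simp
  -- main case: 0 < a, 0 < b
  have hpq : Real.HolderConjugate (1 / a) (1 / b) :=
    Real.holderConjugate_iff.mpr ⟨by rw [lt_div_iff₀ ha']; linarith,
     by rw [one_div, one_div, inv_inv, inv_inv]; linarith⟩
  have expand : ∀ j, Real.exp ⟪y j, a • u + b • v⟫
      = Real.exp ⟪y j, u⟫ ^ a * Real.exp ⟪y j, v⟫ ^ b := fun j => by
    rw [inner_add_right, inner_smul_right, inner_smul_right, Real.exp_add,
      mul_comm a _, mul_comm b _, Real.exp_mul, Real.exp_mul]
  have ecancel : ∀ (c : ℝ), 0 < c → ∀ t : ℝ, 0 ≤ t → (t ^ c) ^ (1 / c) = t := by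
    intro c hc t ht
    rw [← Real.rpow_mul ht, mul_one_div_cancel hc.ne', Real.rpow_one]
  have key : ∑ j ∈ s, Real.exp ⟪y j, a • u + b • v⟫ ≤
      (∑ j ∈ s, Real.exp ⟪y j, u⟫) ^ a * (∑ j ∈ s, Real.exp ⟪y j, v⟫) ^ b := by
    calc ∑ j ∈ s, Real.exp ⟪y j, a • u + b • v⟫
        = ∑ j ∈ s, Real.exp ⟪y j, u⟫ ^ a * Real.exp ⟪y j, v⟫ ^ b :=
          Finset.sum_congr rfl fun j _ => expand j
      _ ≤ (∑ j ∈ s, (Real.exp ⟪y j, u⟫ ^ a) ^ (1 / a)) ^ (1 / (1 / a))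
          * (∑ j ∈ s, (Real.exp ⟪y j, v⟫ ^ b) ^ (1 / b)) ^ (1 / (1 / b)) :=
          Real.inner_le_Lp_mul_Lq_of_nonneg s hpq
            (fun j _ => Real.rpow_nonneg (Real.exp_pos _).le _)
            (fun j _ => Real.rpow_nonneg (Real.exp_pos _).le _)
      _ = (∑ j ∈ s, Real.exp ⟪y j, u⟫) ^ a * (∑ j ∈ s, Real.exp ⟪y j, v⟫) ^ b := by
          rw [one_div_one_div, one_div_one_div,
            Finset.sum_congr rfl fun j _ => ecancel a ha' _ (Real.exp_pos _).le,
            Finset.sum_congr rfl fun j _ => ecancel b hb' _ (Real.exp_pos _).le]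
  calc Real.log (∑ j ∈ s, Real.exp ⟪y j, a • u + b • v⟫)
      ≤ Real.log ((∑ j ∈ s, Real.exp ⟪y j, u⟫) ^ a * (∑ j ∈ s, Real.exp ⟪y j, v⟫) ^ b) :=
        Real.log_le_log (Spos _) key
    _ = a * Real.log (∑ j ∈ s, Real.exp ⟪y j, u⟫)
        + b * Real.log (∑ j ∈ s, Real.exp ⟪y j, v⟫) := by
        rw [Real.log_mul (by positivity) (by positivity),
          Real.log_rpow (Spos u), Real.log_rpow (Spos v)]
    _ = a • Real.log (∑ j ∈ s, Real.exp ⟪y j, u⟫)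
        + b • Real.log (∑ j ∈ s, Real.exp ⟪y j, v⟫) := rfl

/-- the Cox log partial likelihood
`β ↦ Σ_{i∈E} [⟪x_i, β⟫ − log Σ_{j∈R_i} exp⟪x_{ij}, β⟫]` is concave on `ℝ^d`. -/
theorem log_partial_lik_concave
    {d : ℕ} {ι κ : Type*} (E : Finset ι)
    (x : ι → EuclideanSpace ℝ (Fin d))
    (R : ι → Finset κ) (hR : ∀ i ∈ E, (R i).Nonempty)
    (y : ι → κ → EuclideanSpace ℝ (Fin d)) :
    ConcaveOn ℝ Set.univ
      (fun β : EuclideanSpace ℝ (Fin d) =>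
        ∑ i ∈ E, (⟪x i, β⟫ - Real.log (∑ j ∈ R i, Real.exp ⟪y i j, β⟫))) := by
  classical
  induction E using Finset.induction_on with
  | empty => simpa using concaveOn_const (0 : ℝ) convex_univ
  | @insert i E' hnm ih =>
    have hRi := hR i (Finset.mem_insert_self i E')
    have ih' := ih (fun k hk => hR k (Finset.mem_insert_of_mem hk))
    have hterm : ConcaveOn ℝ Set.univ
        (fun β : EuclideanSpace ℝ (Fin d) =>
          ⟪x i, β⟫ - Real.log (∑ j ∈ R i, Real.exp ⟪y i j, β⟫)) := by
      have hlin : ConcaveOn ℝ (Set.univ : Set (EuclideanSpace ℝ (Fin d)))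
          (fun β => ⟪x i, β⟫) := by
        refine ⟨convex_univ, fun u _ v _ a b _ _ _ => le_of_eq ?_⟩
        simp [inner_add_right, inner_smul_right]
      exact hlin.sub (lse_convexOn (R i) hRi (y i))
    have := hterm.add ih'
    refine this.congr fun β _ => ?_
    rw [Finset.sum_insert hnm]; rfl
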